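/- Let M be a d-dimensional subspace of the space of m×n real matrices. If {X₁,…,X_d} and {Y₁,…,Y_d} are two bases of M that both minimize the sum of the ranks of their elements over all bases of M, then the multiset of ranks {rank(X₁),…,rank(X_d)} coincides with the multiset {rank(Y₁),…,rank(Y_d)}; that is, after sorting both rank sequences in nondecreasing order they agree entrywise. -/

import Mathlib

/-- `X : Fin d → ℝ^{m×n}` is a basis of the subspace `M` minimizing the sum of the
ranks of its elements over all bases of `M`. -/
def IsMinSumRankBasis {m n d : ℕ} (M : Submodule ℝ (Matrix (Fin m) (Fin n) ℝ))
    (X : Fin d → Matrix (Fin m) (Fin n) ℝ) : Prop :=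
  (∀ i, X i ∈ M) ∧ LinearIndependent ℝ X ∧
  Submodule.span ℝ (Set.range X) = M ∧
  ∀ Y : Fin d → Matrix (Fin m) (Fin n) ℝ,
    (∀ i, Y i ∈ M) → LinearIndependent ℝ Y →
    Submodule.span ℝ (Set.range Y) = M →
    ∑ i, (X i).rank ≤ ∑ i, (Y i).rank

open Submodule Set

lemma exchange {m n d : ℕ} {M : Submodule ℝ (Matrix (Fin m) (Fin n) ℝ)}
    {X : Fin d → Matrix (Fin m) (Fin n) ℝ} (hX : IsMinSumRankBasis M X) (t : ℕ)
    {A : Matrix (Fin m) (Fin n) ℝ} (hAM : A ∈ M) (hAr : A.rank ≤ t)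
    (hAs : A ∉ Submodule.span ℝ (X '' {i | (X i).rank ≤ t})) : False := by
  obtain ⟨hXM, hXind, hXspan, hXmin⟩ := hX
  set s0 : Set (Matrix (Fin m) (Fin n) ℝ) := X '' {i | (X i).rank ≤ t} with hs0
  have h0 : LinearIndependent ℝ ((↑) : s0 → Matrix (Fin m) (Fin n) ℝ) := by
    rw [hs0, Set.image_eq_range]
    exact (hXind.comp _ Subtype.val_injective).linearIndepOn_id
  have hs : LinearIndependent ℝ ((↑) : ↥(insert A s0) → Matrix (Fin m) (Fin n) ℝ) :=
    LinearIndepOn.id_insert h0 hAs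
  have hst : insert A s0 ⊆ insert A (Set.range X) :=
    Set.insert_subset_insert (Set.image_subset_range _ _)
  obtain ⟨b, hbt, hsb, htb, hbind⟩ := exists_linearIndepOn_id_extension hs hst
  have hAb : A ∈ b := hsb (Set.mem_insert _ _)
  have hbM : b ⊆ (M : Set _) := hbt.trans
    (Set.insert_subset hAM (Set.range_subset_iff.2 hXM))
  have hspanb : Submodule.span ℝ b = M := by
    refine le_antisymm (span_le.2 hbM) ?_
    rw [← hXspan]
    exact span_le.2 fun x hx => htb (Set.mem_insert_of_mem _ hx)
  have hbfin : b.Finite := ((Set.finite_range X).insert A).subset hbt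
  haveI : Fintype ↥b := hbfin.fintype
  have hAX : A ∉ Set.range X := by
    rintro ⟨i, rfl⟩
    exact hAs (subset_span ⟨i, hAr, rfl⟩)
  -- finsets
  classical
  set XF : Finset (Matrix (Fin m) (Fin n) ℝ) := Finset.image X Finset.univ with hXF
  have hXFcard : XF.card = d := by
    rw [hXF, Finset.card_image_of_injective _ hXind.injective, Finset.card_univ,
      Fintype.card_fin]
  have hXFcoe : (XF : Set (Matrix (Fin m) (Fin n) ℝ)) = Set.range X := by
    simp [hXF]
  have hAXF : A ∉ XF := by simpa [← hXFcoe] using hAX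
  set tF := insert A XF with htF
  have htFcard : tF.card = d + 1 := by rw [htF, Finset.card_insert_of_notMem hAXF, hXFcard]
  set bF := b.toFinset with hbF
  have hbFcoe : (bF : Set (Matrix (Fin m) (Fin n) ℝ)) = b := Set.coe_toFinset b
  have hbFcard : bF.card = d := by
    have h1 : Module.finrank ℝ (Submodule.span ℝ b) = bF.card := by
      rw [hbF]; exact finrank_span_set_eq_card hbind
    have h2 : Module.finrank ℝ (Submodule.span ℝ (Set.range X)) = d := by
      rw [finrank_span_eq_card hXind, Fintype.card_fin]
    rw [hspanb] at h1
    rw [hXspan] at h2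
    omega
  have hbtF : bF ⊆ tF := by
    intro x hx
    have : x ∈ b := by rwa [← hbFcoe]
    have := hbt this
    simpa [htF, ← hXFcoe] using this
  have hdiff : (tF \ bF).card = 1 := by
    rw [Finset.card_sdiff_of_subset hbtF, htFcard, hbFcard]; omega
  obtain ⟨w, hw⟩ := Finset.card_eq_one.1 hdiff
  have hwmem : w ∈ tF ∧ w ∉ bF := by
    have : w ∈ tF \ bF := by rw [hw]; exact Finset.mem_singleton_self w
    exact ⟨(Finset.mem_sdiff.1 this).1, (Finset.mem_sdiff.1 this).2⟩
  have hAbF : A ∈ bF := by rw [← Set.mem_toFinset] at hAb; exact hAb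
  have hwA : w ≠ A := fun h => hwmem.2 (h ▸ hAbF)
  have hwX : w ∈ XF := by
    have := hwmem.1
    rw [htF, Finset.mem_insert] at this
    tauto
  have hwrank : t < w.rank := by
    by_contra h
    push_neg at h
    obtain ⟨i, -, rfl⟩ := Finset.mem_image.1 hwX
    have : X i ∈ b := hsb (Set.mem_insert_of_mem _ ⟨i, h, rfl⟩)
    exact hwmem.2 (by rwa [hbF, Set.mem_toFinset])
  -- bF = tF.erase w
  have hbFeq : bF = tF.erase w := by
    apply Finset.eq_of_subset_of_card_le
    · intro x hx
      exact Finset.mem_erase.2 ⟨fun h => hwmem.2 (h ▸ hx), hbtF hx⟩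
    · rw [Finset.card_erase_of_mem hwmem.1, htFcard, hbFcard]; omega
  -- build new family
  have hcardb : Fintype.card ↥b = d := by rw [← Set.toFinset_card, ← hbF, hbFcard]
  let e : Fin d ≃ ↥b := (Fintype.equivFinOfCardEq hcardb).symm
  set Z : Fin d → Matrix (Fin m) (Fin n) ℝ := fun i => (e i : Matrix (Fin m) (Fin n) ℝ)
    with hZ
  have hrangeZ : Set.range Z = b := by
    rw [hZ]
    have : Set.range (fun i => (e i : Matrix (Fin m) (Fin n) ℝ))
        = Subtype.val '' Set.range e := (Set.range_comp _ _)
    rw [this, Set.range_eq_univ.2 e.surjective, Set.image_univ, Subtype.range_coe]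
  have hmin := hXmin Z (fun i => hbM (e i).2) (LinearIndependent.comp hbind e e.injective)
    (by rw [hrangeZ, hspanb])
  -- sum computations
  have hsumZ : ∑ i, (Z i).rank = ∑ x ∈ bF, x.rank := by
    rw [← Finset.sum_coe_sort bF (fun x => Matrix.rank x)]
    exact Fintype.sum_equiv (e.trans (Equiv.subtypeEquivRight (fun x => by
      rw [hbF, Set.mem_toFinset]))) _ _ (fun i => rfl)
  have hsumb : ∑ x ∈ bF, x.rank + w.rank = ∑ x ∈ tF, x.rank := by
    rw [hbFeq]; exact Finset.sum_erase_add tF _ hwmem.1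
  have hsumt : ∑ x ∈ tF, x.rank = A.rank + ∑ x ∈ XF, x.rank := Finset.sum_insert hAXF
  have hsumX : ∑ x ∈ XF, x.rank = ∑ i, (X i).rank :=
    Finset.sum_image (fun x _ y _ h => hXind.injective h)
  rw [hsumZ] at hmin
  omega

lemma count_lemma {m n d : ℕ} {M : Submodule ℝ (Matrix (Fin m) (Fin n) ℝ)}
    {X : Fin d → Matrix (Fin m) (Fin n) ℝ} (hX : IsMinSumRankBasis M X) (t : ℕ) :
    (Finset.univ.filter fun i => (X i).rank ≤ t).card
      = Module.finrank ℝ (Submodule.span ℝ {A | A ∈ M ∧ A.rank ≤ t}) := by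
  classical
  obtain ⟨hXM, hXind, hXspan, hXmin⟩ := hX
  have h0 : LinearIndependent ℝ
      ((↑) : ↥(X '' {i | (X i).rank ≤ t}) → Matrix (Fin m) (Fin n) ℝ) := by
    rw [Set.image_eq_range]
    exact (hXind.comp _ Subtype.val_injective).linearIndepOn_id
  set F : Finset (Matrix (Fin m) (Fin n) ℝ) :=
    (Finset.univ.filter fun i => (X i).rank ≤ t).image X with hF
  have hFcoe : (F : Set (Matrix (Fin m) (Fin n) ℝ)) = X '' {i | (X i).rank ≤ t} := by
    simp [hF]
  have hFcard : F.card = (Finset.univ.filter fun i => (X i).rank ≤ t).card :=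
    Finset.card_image_of_injective _ hXind.injective
  have hfr : Module.finrank ℝ (Submodule.span ℝ (X '' {i | (X i).rank ≤ t})) = F.card := by
    rw [← hFcoe] at h0 ⊢
    exact finrank_span_finset_eq_card h0
  have hle : Submodule.span ℝ (X '' {i | (X i).rank ≤ t})
      ≤ Submodule.span ℝ {A | A ∈ M ∧ A.rank ≤ t} := by
    apply Submodule.span_mono
    rintro x ⟨i, hi, rfl⟩
    exact ⟨hXM i, hi⟩
  refine le_antisymm ?_ ?_
  · rw [← hFcard, ← hfr]
    exact Submodule.finrank_mono hle
  · by_contra h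
    push_neg at h
    have : ¬ ({A | A ∈ M ∧ A.rank ≤ t}
        ⊆ (Submodule.span ℝ (X '' {i | (X i).rank ≤ t}) : Set _)) := by
      intro hsub
      have := Submodule.finrank_mono (Submodule.span_le.2 hsub)
      omega
    obtain ⟨A, hA, hAs⟩ := Set.not_subset.1 this
    exact absurd (exchange ⟨hXM, hXind, hXspan, hXmin⟩ t hA.1 hA.2 hAs) (fun h => h)

/-- Corollary: any two bases of `M` of minimal total rank have the same multiset of
ranks. -/
theorem minSumRankBases_same_rank_multiset {m n d : ℕ}
    (M : Submodule ℝ (Matrix (Fin m) (Fin n) ℝ))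
    (hM : Module.finrank ℝ M = d)
    (X Y : Fin d → Matrix (Fin m) (Fin n) ℝ)
    (hX : IsMinSumRankBasis M X) (hY : IsMinSumRankBasis M Y) :
    Multiset.map (fun i => (X i).rank) Finset.univ.val =
      Multiset.map (fun i => (Y i).rank) Finset.univ.val := by
  classical
  have hc : ∀ t, (Finset.univ.filter fun i => (X i).rank ≤ t).card
      = (Finset.univ.filter fun i => (Y i).rank ≤ t).card := fun t => by
    rw [count_lemma hX t, count_lemma hY t]
  have hlt : ∀ a : ℕ, (Finset.univ.filter fun i => (X i).rank < a).card
      = (Finset.univ.filter fun i => (Y i).rank < a).card := by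
    intro a
    match a with
    | 0 => simp
    | a + 1 => simpa [Nat.lt_succ_iff] using hc a
  have hsplit : ∀ (W : Fin d → Matrix (Fin m) (Fin n) ℝ) (a : ℕ),
      (Finset.univ.filter fun i => (W i).rank ≤ a).card
      = (Finset.univ.filter fun i => (W i).rank < a).card
        + (Finset.univ.filter fun i => (W i).rank = a).card := by
    intro W a
    have hcg : Finset.univ.filter (fun i => (W i).rank ≤ a)
        = Finset.univ.filter (fun i => (W i).rank < a ∨ (W i).rank = a) :=
      Finset.filter_congr (fun i _ => by omega)
    rw [hcg, Finset.filter_or, Finset.card_union_of_disjoint]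
    rw [Finset.disjoint_left]
    intro i hi hi'
    simp only [Finset.mem_filter] at hi hi'
    omega
  have heq : ∀ a : ℕ, (Finset.univ.filter fun i => (X i).rank = a).card
      = (Finset.univ.filter fun i => (Y i).rank = a).card := by
    intro a
    have h1 := hsplit X a
    have h2 := hsplit Y a
    have h3 := hc a
    have h4 := hlt a
    omega
  refine Multiset.ext.2 fun a => ?_
  rw [Multiset.count_map, Multiset.count_map]
  have key : ∀ (W : Fin d → Matrix (Fin m) (Fin n) ℝ),
      Multiset.card (Multiset.filter (fun i => a = (W i).rank) Finset.univ.val)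
      = (Finset.univ.filter fun i => (W i).rank = a).card := by
    intro W
    have hcg : Multiset.filter (fun i => a = (W i).rank) Finset.univ.val
        = Multiset.filter (fun i => (W i).rank = a) Finset.univ.val :=
      Multiset.filter_congr (fun i _ => eq_comm)
    rw [hcg]
    rfl
  rw [key X, key Y, heq a]
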